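/- The property of having an algebraic semantics persists in extensions: if a logic ⊢ has an algebraic semantics and ⊢' is a logic in the same language with ⊢ ⊆ ⊢', then ⊢' has an algebraic semantics. -/

import Mathlib

/-- An algebraic signature: a type of operation symbols with arities. -/
structure Sig : Type 1 where
  Op : Type
  ar : Op → ℕ

/-- Formulas (terms) over a signature, with variables indexed by ℕ. -/
inductive Fm (L : Sig) : Type where
  | var : ℕ → Fm L
  | op : (f : L.Op) → (Fin (L.ar f) → Fm L) → Fm L

/-- An algebra for the signature `L`. -/
structure Alg (L : Sig) : Type 1 where
  carrier : Type
  interp : (f : L.Op) → (Fin (L.ar f) → carrier) → carrier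

/-- Evaluation of a formula in an algebra under a valuation of the variables. -/
def Fm.eval {L : Sig} (A : Alg L) (v : ℕ → A.carrier) : Fm L → A.carrier
  | .var n => v n
  | .op f as => A.interp f (fun i => (as i).eval A v)

/-- Substitution (endomorphism of the formula algebra). -/
def Fm.subst {L : Sig} (σ : ℕ → Fm L) : Fm L → Fm L
  | .var n => σ n
  | .op f as => .op f (fun i => (as i).subst σ)

/-- The set of variables occurring in a formula. -/
def Fm.vars {L : Sig} : Fm L → Set ℕ
  | .var n => {n}
  | .op _ as => ⋃ i, (as i).vars

/-- Substitute the formula `ψ` for the variable `v` in `φ`. -/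
def Fm.subst1 {L : Sig} (v : ℕ) (ψ : Fm L) (φ : Fm L) : Fm L :=
  φ.subst (fun n => if n = v then ψ else .var n)

/-- A logic: a substitution-invariant (finitary or not) consequence relation on formulas. -/
structure Logic (L : Sig) : Type where
  deriv : Set (Fm L) → Fm L → Prop
  axm : ∀ Γ φ, φ ∈ Γ → deriv Γ φ
  mono : ∀ Γ Δ φ, Γ ⊆ Δ → deriv Γ φ → deriv Δ φ
  cut : ∀ Γ Δ φ, deriv Γ φ → (∀ γ ∈ Γ, deriv Δ γ) → deriv Δ φ
  substInv : ∀ (σ : ℕ → Fm L) Γ φ, deriv Γ φ → deriv (Fm.subst σ '' Γ) (φ.subst σ)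

/-- A logical matrix: an algebra with a set of designated elements. -/
structure LMatrix (L : Sig) : Type 1 where
  alg : Alg L
  F : Set alg.carrier

/-- The consequence relation induced by a class of matrices. -/
def inducedBy {L : Sig} (M : Set (LMatrix L)) (Γ : Set (Fm L)) (φ : Fm L) : Prop :=
  ∀ m ∈ M, ∀ v : ℕ → m.alg.carrier,
    (∀ γ ∈ Γ, γ.eval m.alg v ∈ m.F) → φ.eval m.alg v ∈ m.F

/-- `M` is a matrix semantics for the logic `ℒ`. -/
def IsMatrixSemantics {L : Sig} (ℒ : Logic L) (M : Set (LMatrix L)) : Prop :=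
  ∀ Γ φ, ℒ.deriv Γ φ ↔ inducedBy M Γ φ

/-- Equational consequence relative to a class of algebras (equations as pairs of formulas). -/
def eqConseq {L : Sig} (K : Set (Alg L)) (Θ : Set (Fm L × Fm L)) (e : Fm L × Fm L) : Prop :=
  ∀ A ∈ K, ∀ v : ℕ → A.carrier,
    (∀ p ∈ Θ, p.1.eval A v = p.2.eval A v) → e.1.eval A v = e.2.eval A v

/-- `τ(φ)`: the result of substituting `φ` for the variable `x` (= variable 0) in each
equation of `τ`. -/
def tauApp {L : Sig} (τ : Set (Fm L × Fm L)) (φ : Fm L) : Set (Fm L × Fm L) :=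
  (fun e => (Fm.subst1 0 φ e.1, Fm.subst1 0 φ e.2)) '' τ

/-- `τ[Γ]`. -/
def tauAppSet {L : Sig} (τ : Set (Fm L × Fm L)) (Γ : Set (Fm L)) : Set (Fm L × Fm L) :=
  ⋃ γ ∈ Γ, tauApp τ γ

/-- `τ` is a set of equations in the single variable `x` (= variable 0). -/
def IsUnivalent {L : Sig} (τ : Set (Fm L × Fm L)) : Prop :=
  ∀ e ∈ τ, e.1.vars ⊆ ({0} : Set ℕ) ∧ e.2.vars ⊆ ({0} : Set ℕ)

/-- `K` is a `τ`-algebraic semantics for `ℒ`: `Γ ⊢ φ` iff `τ[Γ] ⊨_K τ(φ)`. -/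
def IsTauAlgSem {L : Sig} (ℒ : Logic L) (τ : Set (Fm L × Fm L)) (K : Set (Alg L)) : Prop :=
  IsUnivalent τ ∧ ∀ Γ φ, ℒ.deriv Γ φ ↔ ∀ e ∈ tauApp τ φ, eqConseq K (tauAppSet τ Γ) e

/-- `ℒ` has an algebraic semantics (admits an equational completeness theorem). -/
def HasAlgSem {L : Sig} (ℒ : Logic L) : Prop :=
  ∃ (τ : Set (Fm L × Fm L)) (K : Set (Alg L)), IsTauAlgSem ℒ τ K

/-- `θ` is a congruence of the algebra `A`. -/
def IsCong {L : Sig} (A : Alg L) (θ : A.carrier → A.carrier → Prop) : Prop :=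
  Equivalence θ ∧ ∀ (f : L.Op) (as bs : Fin (L.ar f) → A.carrier),
    (∀ i, θ (as i) (bs i)) → θ (A.interp f as) (A.interp f bs)

/-- The congruence of `A` generated by `X` (least congruence containing `X`). -/
def congGen {L : Sig} (A : Alg L) (X : Set (A.carrier × A.carrier))
    (a c : A.carrier) : Prop :=
  ∀ θ, IsCong A θ → (∀ p ∈ X, θ p.1 p.2) → θ a c

/-- `p` is a unary polynomial function of `A`: `p(a) = φ^A(a, c⃗)` for a formula `φ(x, y⃗)`
and parameters `c⃗` from `A`. -/
def IsUnaryPoly {L : Sig} (A : Alg L) (p : A.carrier → A.carrier) : Prop :=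
  ∃ (φ : Fm L) (c : ℕ → A.carrier),
    ∀ a, p a = φ.eval A (fun n => if n = 0 then a else c n)

/-- Compatibility of a relation with a set. -/
def Compatible {L : Sig} (A : Alg L) (θ : A.carrier → A.carrier → Prop)
    (F : Set A.carrier) : Prop :=
  ∀ a c, θ a c → a ∈ F → c ∈ F

/-- The Leibniz congruence `Ω^A F`: the largest congruence of `A` compatible with `F`
(realized as the union of all congruences compatible with `F`). -/
def leibniz {L : Sig} (A : Alg L) (F : Set A.carrier) (a c : A.carrier) : Prop :=
  ∃ θ, IsCong A θ ∧ Compatible A θ F ∧ θ a c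

/-- The formula algebra. -/
def FmAlg (L : Sig) : Alg L :=
  ⟨Fm L, fun f as => Fm.op f as⟩

/-- `ℒ` has no theorems. -/
def LacksTheorems {L : Sig} (ℒ : Logic L) : Prop :=
  ¬ ∃ φ, ℒ.deriv ∅ φ

/-- `ℒ` is assertional. -/
def Assertional {L : Sig} (ℒ : Logic L) : Prop :=
  ∃ (M : Set (LMatrix L)) (φ : Fm L), IsMatrixSemantics ℒ M ∧ φ.vars ⊆ ({0} : Set ℕ) ∧
    ∀ m ∈ M, ∃ c : m.alg.carrier,
      (∀ a : m.alg.carrier, φ.eval m.alg (fun _ => a) = c) ∧ m.F = {c}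

/-- `ℒ` is almost assertional. -/
def AlmostAssertional {L : Sig} (ℒ : Logic L) : Prop :=
  LacksTheorems ℒ ∧
  ∃ (M : Set (LMatrix L)) (φ : Fm L), IsMatrixSemantics ℒ M ∧ φ.vars ⊆ ({0} : Set ℕ) ∧
    ∀ m ∈ M, m.F.Nonempty → ∃ c : m.alg.carrier,
      (∀ a : m.alg.carrier, φ.eval m.alg (fun _ => a) = c) ∧ m.F = {c}

/-- Two formulas are logically equivalent in `ℒ`. -/
def LogEquiv {L : Sig} (ℒ : Logic L) (ε δ : Fm L) : Prop :=
  ∀ (φ : Fm L) (v : ℕ),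
    ℒ.deriv {Fm.subst1 v ε φ} (Fm.subst1 v δ φ) ∧
    ℒ.deriv {Fm.subst1 v δ φ} (Fm.subst1 v ε φ)

/-! ### Auxiliary lemmas -/

theorem Fm.eval_subst' {L : Sig} (A : Alg L) (v : ℕ → A.carrier) (σ : ℕ → Fm L) :
    ∀ χ : Fm L, (χ.subst σ).eval A v = χ.eval A (fun n => (σ n).eval A v)
  | .var _ => rfl
  | .op f as => by
    simp only [Fm.subst, Fm.eval]
    exact congrArg _ (funext fun i => Fm.eval_subst' A v σ (as i))

theorem Fm.subst_subst' {L : Sig} (σ σ' : ℕ → Fm L) :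
    ∀ χ : Fm L, (χ.subst σ).subst σ' = χ.subst (fun n => (σ n).subst σ')
  | .var _ => rfl
  | .op f as => by
    simp only [Fm.subst]
    exact congrArg _ (funext fun i => Fm.subst_subst' σ σ' (as i))

theorem Fm.subst_var' {L : Sig} : ∀ χ : Fm L, χ.subst Fm.var = χ
  | .var _ => rfl
  | .op f as => by
    simp only [Fm.subst]
    exact congrArg _ (funext fun i => Fm.subst_var' (as i))

theorem Fm.subst_eq_of_vars {L : Sig} (σ σ' : ℕ → Fm L) :
    ∀ χ : Fm L, χ.vars ⊆ ({0} : Set ℕ) → σ 0 = σ' 0 → χ.subst σ = χ.subst σ'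
  | .var n, hv, h0 => by
    have : n = 0 := hv rfl
    subst this
    exact h0
  | .op f as, hv, h0 => by
    simp only [Fm.subst]
    refine congrArg _ (funext fun i => Fm.subst_eq_of_vars σ σ' (as i) ?_ h0)
    exact fun n hn => hv (Set.mem_iUnion.2 ⟨i, hn⟩)

theorem subst1_subst {L : Sig} (ε : Fm L) (hε : ε.vars ⊆ ({0} : Set ℕ))
    (γ : Fm L) (σ : ℕ → Fm L) :
    (Fm.subst1 0 γ ε).subst σ = Fm.subst1 0 (γ.subst σ) ε := by
  unfold Fm.subst1
  rw [Fm.subst_subst']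
  exact Fm.subst_eq_of_vars _ _ ε hε (by simp)

/-- Having an algebraic semantics persists in extensions. -/
theorem hasAlgSem_of_extension {L : Sig} (ℒ ℒ' : Logic L)
    (h : HasAlgSem ℒ) (hext : ∀ Γ φ, ℒ.deriv Γ φ → ℒ'.deriv Γ φ) :
    HasAlgSem ℒ' := by
  obtain ⟨τ, K, hUni, hSem⟩ := h
  refine ⟨τ, {A | ∀ Δ ψ, ℒ'.deriv Δ ψ → ∀ e ∈ tauApp τ ψ, eqConseq {A} (tauAppSet τ Δ) e},
    hUni, fun Γ φ => ⟨?_, ?_⟩⟩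
  · intro hd e he A hA v hv
    exact hA Γ φ hd e he A rfl v hv
  · intro H
    by_contra hn
    -- the `ℒ'`-theory generated by `Γ`
    set Δ : Set (Fm L) := {ψ | ℒ'.deriv Γ ψ} with hΔ
    have hΓΔ : Γ ⊆ Δ := fun γ hγ => ℒ'.axm Γ γ hγ
    have hcutΔ : ∀ χ, ℒ'.deriv Δ χ → ℒ'.deriv Γ χ := fun χ hχ =>
      ℒ'.cut Δ Γ χ hχ (fun γ hγ => hγ)
    -- the relative congruence on the formula algebra
    set r : Fm L → Fm L → Prop :=
      fun p q => eqConseq K (tauAppSet τ Δ) (p, q) with hr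
    have hrrefl : ∀ p, r p p := fun p A _ v _ => rfl
    have hrEquiv : Equivalence r :=
      ⟨hrrefl, fun {p q} hpq A hA v hv => (hpq A hA v hv).symm,
        fun {p q s} h1 h2 A hA v hv => (h1 A hA v hv).trans (h2 A hA v hv)⟩
    have hrcomp : ∀ (f : L.Op) (as bs : Fin (L.ar f) → Fm L),
        (∀ i, r (as i) (bs i)) → r (.op f as) (.op f bs) := by
      intro f as bs hi A hA v hv
      show (Fm.op f as).eval A v = (Fm.op f bs).eval A v
      simp only [Fm.eval]
      exact congrArg _ (funext fun i => hi i A hA v hv)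
    -- the quotient algebra
    set Q : Alg L := ⟨Quot r, fun f qs => Quot.mk r (.op f (fun i => (qs i).out))⟩ with hQ
    have hout : ∀ p : Fm L, r ((Quot.mk r p).out) p := fun p =>
      hrEquiv.eqvGen_iff.mp (Quot.eqvGen_exact (Quot.out_eq (Quot.mk r p)))
    have hevalQ : ∀ (χ : Fm L) (σ : ℕ → Fm L),
        χ.eval Q (fun n => Quot.mk r (σ n)) = Quot.mk r (χ.subst σ) := by
      intro χ
      induction χ with
      | var n => intro σ; rfl
      | op f as ih =>
        intro σ
        show Q.interp f (fun i => (as i).eval Q (fun n => Quot.mk r (σ n)))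
            = Quot.mk r (Fm.op f (fun i => (as i).subst σ))
        show Quot.mk r (Fm.op f (fun i => ((as i).eval Q (fun n => Quot.mk r (σ n))).out)) = _
        refine Quot.sound (hrcomp f _ _ fun i => ?_)
        rw [ih i σ]
        exact hout _
    -- membership of pairs in the congruence, via the semantics of `ℒ`
    have hmemr : ∀ χ : Fm L, ℒ'.deriv Γ χ →
        ∀ ε δ : Fm L, (ε, δ) ∈ τ → r (Fm.subst1 0 χ ε) (Fm.subst1 0 χ δ) := by
      intro χ hχ ε δ hεδ
      have hLχ : ℒ.deriv Δ χ := ℒ.axm Δ χ hχ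
      exact (hSem Δ χ).mp hLχ _ ⟨(ε, δ), hεδ, rfl⟩
    -- `Q` belongs to the new class of algebras
    have hQK' : ∀ Δ₀ ψ, ℒ'.deriv Δ₀ ψ → ∀ e ∈ tauApp τ ψ,
        eqConseq {Q} (tauAppSet τ Δ₀) e := by
      intro Δ₀ ψ hdψ e he B hB v hv
      rcases hB with rfl
      set σ : ℕ → Fm L := fun n => (v n).out with hσ
      have hvσ : v = fun n => Quot.mk r (σ n) := funext fun n => (Quot.out_eq (v n)).symm
      -- each substituted premise is derivable from `Γ`
      have hprem : ∀ δ₀ ∈ Δ₀, ℒ'.deriv Γ (δ₀.subst σ) := by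
        intro δ₀ hδ₀
        have hkey : ∀ e' ∈ tauApp τ (δ₀.subst σ), eqConseq K (tauAppSet τ Δ) e' := by
          rintro e' ⟨⟨ε, δ⟩, hεδ, rfl⟩
          have hp : (Fm.subst1 0 δ₀ ε, Fm.subst1 0 δ₀ δ) ∈ tauAppSet τ Δ₀ :=
            Set.mem_biUnion hδ₀ ⟨(ε, δ), hεδ, rfl⟩
          have := hv _ hp
          rw [hvσ] at this
          simp only [hevalQ] at this
          rw [subst1_subst ε (hUni _ hεδ).1 δ₀ σ, subst1_subst δ (hUni _ hεδ).2 δ₀ σ]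
            at this
          exact hrEquiv.eqvGen_iff.mp (Quot.eqvGen_exact this)
        have hLd : ℒ.deriv Δ (δ₀.subst σ) := (hSem Δ (δ₀.subst σ)).mpr hkey
        exact hcutΔ _ (hext _ _ hLd)
      have hσψ : ℒ'.deriv Γ (ψ.subst σ) := by
        have h1 : ℒ'.deriv (Fm.subst σ '' Δ₀) (ψ.subst σ) := ℒ'.substInv σ Δ₀ ψ hdψ
        refine ℒ'.cut _ Γ _ h1 ?_
        rintro γ ⟨δ₀, hδ₀, rfl⟩
        exact hprem δ₀ hδ₀
      rcases he with ⟨⟨ε, δ⟩, hεδ, rfl⟩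
      rw [hvσ]
      show (Fm.subst1 0 ψ ε).eval Q _ = (Fm.subst1 0 ψ δ).eval Q _
      simp only [hevalQ]
      rw [subst1_subst ε (hUni _ hεδ).1 ψ σ, subst1_subst δ (hUni _ hεδ).2 ψ σ]
      exact Quot.sound (hmemr _ hσψ ε δ hεδ)
    -- refute `τ(φ)` in `Q` under the canonical valuation
    set v₀ : ℕ → Q.carrier := fun n => Quot.mk r (.var n) with hv₀
    have hv₀prem : ∀ p ∈ tauAppSet τ Γ, p.1.eval Q v₀ = p.2.eval Q v₀ := by
      rintro p hp
      rcases Set.mem_iUnion₂.1 hp with ⟨γ, hγ, ⟨⟨ε, δ⟩, hεδ, rfl⟩⟩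
      show (Fm.subst1 0 γ ε).eval Q (fun n => Quot.mk r (Fm.var n)) =
        (Fm.subst1 0 γ δ).eval Q (fun n => Quot.mk r (Fm.var n))
      simp only [hevalQ, Fm.subst_var']
      exact Quot.sound (hmemr γ (ℒ'.axm Γ γ hγ) ε δ hεδ)
    have hfin : ∀ e ∈ tauApp τ φ, eqConseq K (tauAppSet τ Δ) e := by
      rintro e ⟨⟨ε, δ⟩, hεδ, rfl⟩
      have h1 := H _ ⟨(ε, δ), hεδ, rfl⟩ Q hQK' v₀ hv₀prem
      simp only [hv₀, hevalQ, Fm.subst_var'] at h1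
      exact hrEquiv.eqvGen_iff.mp (Quot.eqvGen_exact h1)
    exact hn (hcutΔ φ (hext _ _ ((hSem Δ φ).mpr hfin)))
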